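/- arXiv:2107.10660 — 2 statements merged into one kernel-verified Lean document; each statement's English description precedes it below -/
import Mathlib

section
/- Let G be a connected simple graph that contains an induced 2K_2. Then either G is isomorphic to one of 2K_2, P_5, the hammer, the butterfly, or C_6, or there exists an edge e ∈ E(G) such that G/e contains an induced 2K_2 or an induced C_4. -/
open SimpleGraph

/-- Contraction of the edge between adjacent vertices `u` and `v`:
`v` is merged into `u`, so the vertex set is `V \ {v}`, and `u` inherits
the neighbours of `v`; loops and multiple edges are removed. -/
def SimpleGraph.contractEdge {V : Type*} (G : SimpleGraph V) (u v : V) :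
    SimpleGraph {x : V // x ≠ v} where
  Adj a b := a ≠ b ∧
    (G.Adj a.1 b.1 ∨ (a.1 = u ∧ G.Adj v b.1) ∨ (b.1 = u ∧ G.Adj v a.1))
  symm := by
    refine ⟨?_⟩
    rintro a b ⟨hab, h⟩
    refine ⟨hab.symm, ?_⟩
    rcases h with h | ⟨h1, h2⟩ | ⟨h1, h2⟩
    · exact Or.inl h.symm
    · exact Or.inr (Or.inr ⟨h1, h2⟩)
    · exact Or.inr (Or.inl ⟨h1, h2⟩)
  loopless := by refine ⟨?_⟩; rintro a ⟨hab, -⟩; exact hab rfl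

/-- `G` contains an induced subgraph isomorphic to `H`. -/
def SimpleGraph.HasInduced {V W : Type*} (G : SimpleGraph V) (H : SimpleGraph W) : Prop :=
  ∃ S : Set V, Nonempty (G.induce S ≃g H)

/-- A set of vertices is independent if its vertices are pairwise nonadjacent. -/
def SimpleGraph.IsIndependentSet {V : Type*} (G : SimpleGraph V) (S : Set V) : Prop :=
  S.Pairwise fun a b => ¬ G.Adj a b

/-- `2K₂`: two disjoint edges. -/
def twoK2 : SimpleGraph (Fin 4) := fromEdgeSet {s(0,1), s(2,3)}

/-- The hammer: a triangle `0,1,2` with the path `2-3-4` of length two attached. -/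
def hammerGraph : SimpleGraph (Fin 5) :=
  fromEdgeSet {s(0,1), s(0,2), s(1,2), s(2,3), s(3,4)}

/-- The butterfly: two triangles `0,1,2` and `2,3,4` sharing exactly the vertex `2`. -/
def butterflyGraph : SimpleGraph (Fin 5) :=
  fromEdgeSet {s(0,1), s(0,2), s(1,2), s(2,3), s(2,4), s(3,4)}

lemma hasInduced_of_map {V : Type*} {n : ℕ} (G : SimpleGraph V) (H : SimpleGraph (Fin n))
    (f : Fin n → V) (hinj : Function.Injective f)
    (h : ∀ i j, G.Adj (f i) (f j) ↔ H.Adj i j) : G.HasInduced H := by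
  refine ⟨Set.range f, ⟨⟨(Equiv.ofInjective f hinj).symm, ?_⟩⟩⟩
  intro x y
  have hx : f ((Equiv.ofInjective f hinj).symm x) = x.1 :=
    congrArg Subtype.val ((Equiv.ofInjective f hinj).apply_symm_apply x)
  have hy : f ((Equiv.ofInjective f hinj).symm y) = y.1 :=
    congrArg Subtype.val ((Equiv.ofInjective f hinj).apply_symm_apply y)
  rw [← h, hx, hy]
  rfl

lemma iso_of_map {V : Type*} {n : ℕ} (G : SimpleGraph V) (H : SimpleGraph (Fin n))
    (f : Fin n → V) (hbij : Function.Bijective f)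
    (h : ∀ i j, G.Adj (f i) (f j) ↔ H.Adj i j) : Nonempty (G ≃g H) := by
  refine ⟨⟨(Equiv.ofBijective f hbij).symm, ?_⟩⟩
  intro x y
  rw [← h]
  simp only [Equiv.ofBijective_apply_symm_apply]

lemma has2K2 {V : Type*} (G : SimpleGraph V) (a b c d : V)
    (hab : G.Adj a b) (hcd : G.Adj c d)
    (hac : ¬G.Adj a c) (had : ¬G.Adj a d) (hbc : ¬G.Adj b c) (hbd : ¬G.Adj b d) :
    G.HasInduced twoK2 := by
  have nab : a ≠ b := hab.ne
  have ncd : c ≠ d := hcd.ne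
  have nac : a ≠ c := by rintro rfl; exact had hcd
  have nad : a ≠ d := by rintro rfl; exact hac hcd.symm
  have nbc : b ≠ c := by rintro rfl; exact hbd hcd
  have nbd : b ≠ d := by rintro rfl; exact hbc hcd.symm
  have hba := hab.symm; have hdc := hcd.symm
  have hca : ¬G.Adj c a := fun h => hac h.symm
  have hda : ¬G.Adj d a := fun h => had h.symm
  have hcb : ¬G.Adj c b := fun h => hbc h.symm
  have hdb : ¬G.Adj d b := fun h => hbd h.symm
  have nba := nab.symm; have ndc := ncd.symm
  have nca := nac.symm; have nda := nad.symm
  have ncb := nbc.symm; have ndb := nbd.symm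
  apply hasInduced_of_map G twoK2 ![a,b,c,d]
  · intro i j hij
    fin_cases i <;> fin_cases j <;> first | rfl | exact absurd hij (by assumption)
  · intro i j
    fin_cases i <;> fin_cases j <;>
      first
        | exact iff_of_true (by assumption) (by simp [twoK2] <;> decide)
        | exact iff_of_false (by first | exact G.irrefl | assumption) (by simp [twoK2] <;> decide)

lemma hasC4 {V : Type*} (G : SimpleGraph V) (a b c d : V)
    (hab : G.Adj a b) (hbc : G.Adj b c) (hcd : G.Adj c d) (hda : G.Adj d a)
    (hac : ¬G.Adj a c) (hbd : ¬G.Adj b d) (nac : a ≠ c) (nbd : b ≠ d) :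
    G.HasInduced (cycleGraph 4) := by
  have nab : a ≠ b := hab.ne
  have nbc : b ≠ c := hbc.ne
  have ncd : c ≠ d := hcd.ne
  have nad : a ≠ d := fun h => G.irrefl (h ▸ hda)
  have hba := hab.symm; have hcb := hbc.symm; have hdc := hcd.symm; have had' := hda.symm
  have hca : ¬G.Adj c a := fun h => hac h.symm
  have hdb : ¬G.Adj d b := fun h => hbd h.symm
  have nba := nab.symm; have ncb := nbc.symm; have ndc := ncd.symm
  have nca := nac.symm; have nda := nad.symm; have ndb := nbd.symm
  apply hasInduced_of_map G (cycleGraph 4) ![a,b,c,d]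
  · intro i j hij
    fin_cases i <;> fin_cases j <;> first | rfl | exact absurd hij (by assumption)
  · intro i j
    fin_cases i <;> fin_cases j <;>
      first
        | exact iff_of_true (by assumption) (by simp [cycleGraph_adj] <;> decide)
        | exact iff_of_false (by first | exact G.irrefl | assumption) (by simp [cycleGraph_adj] <;> decide)

lemma iso2K2 {V : Type*} (G : SimpleGraph V) (a b c d : V)
    (e01 : G.Adj a b) (n02 : ¬ G.Adj a c) (n03 : ¬ G.Adj a d) (n12 : ¬ G.Adj b c) (n13 : ¬ G.Adj b d) (e23 : G.Adj c d) (d01 : a ≠ b) (d02 : a ≠ c) (d03 : a ≠ d) (d12 : b ≠ c) (d13 : b ≠ d) (d23 : c ≠ d)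
    (hsurj : ∀ x : V, x = a ∨ x = b ∨ x = c ∨ x = d) : Nonempty (G ≃g twoK2) := by
  have e10 : G.Adj b a := e01.symm
  have d10 : b ≠ a := d01.symm
  have n20 : ¬ G.Adj c a := fun h => n02 h.symm
  have d20 : c ≠ a := d02.symm
  have n30 : ¬ G.Adj d a := fun h => n03 h.symm
  have d30 : d ≠ a := d03.symm
  have n21 : ¬ G.Adj c b := fun h => n12 h.symm
  have d21 : c ≠ b := d12.symm
  have n31 : ¬ G.Adj d b := fun h => n13 h.symm
  have d31 : d ≠ b := d13.symm
  have e32 : G.Adj d c := e23.symm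
  have d32 : d ≠ c := d23.symm
  apply iso_of_map G twoK2 ![a,b,c,d]
  · constructor
    · intro i j hij; fin_cases i <;> fin_cases j <;> first | rfl | exact absurd hij (by assumption)
    · intro x
      rcases hsurj x with rfl|rfl|rfl|rfl
      exacts [⟨0, rfl⟩, ⟨1, rfl⟩, ⟨2, rfl⟩, ⟨3, rfl⟩]
  · intro i j
    fin_cases i <;> fin_cases j <;>
      first
        | exact iff_of_true (by assumption) (by simp [twoK2] <;> decide)
        | exact iff_of_false (by first | exact G.irrefl | assumption) (by simp [twoK2] <;> decide)

lemma isoPath5 {V : Type*} (G : SimpleGraph V) (a b c d e : V)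
    (e01 : G.Adj a b) (n02 : ¬ G.Adj a c) (n03 : ¬ G.Adj a d) (n04 : ¬ G.Adj a e) (e12 : G.Adj b c) (n13 : ¬ G.Adj b d) (n14 : ¬ G.Adj b e) (e23 : G.Adj c d) (n24 : ¬ G.Adj c e) (e34 : G.Adj d e) (d01 : a ≠ b) (d02 : a ≠ c) (d03 : a ≠ d) (d04 : a ≠ e) (d12 : b ≠ c) (d13 : b ≠ d) (d14 : b ≠ e) (d23 : c ≠ d) (d24 : c ≠ e) (d34 : d ≠ e)
    (hsurj : ∀ x : V, x = a ∨ x = b ∨ x = c ∨ x = d ∨ x = e) : Nonempty (G ≃g (pathGraph 5)) := by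
  have e10 : G.Adj b a := e01.symm
  have d10 : b ≠ a := d01.symm
  have n20 : ¬ G.Adj c a := fun h => n02 h.symm
  have d20 : c ≠ a := d02.symm
  have n30 : ¬ G.Adj d a := fun h => n03 h.symm
  have d30 : d ≠ a := d03.symm
  have n40 : ¬ G.Adj e a := fun h => n04 h.symm
  have d40 : e ≠ a := d04.symm
  have e21 : G.Adj c b := e12.symm
  have d21 : c ≠ b := d12.symm
  have n31 : ¬ G.Adj d b := fun h => n13 h.symm
  have d31 : d ≠ b := d13.symm
  have n41 : ¬ G.Adj e b := fun h => n14 h.symm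
  have d41 : e ≠ b := d14.symm
  have e32 : G.Adj d c := e23.symm
  have d32 : d ≠ c := d23.symm
  have n42 : ¬ G.Adj e c := fun h => n24 h.symm
  have d42 : e ≠ c := d24.symm
  have e43 : G.Adj e d := e34.symm
  have d43 : e ≠ d := d34.symm
  apply iso_of_map G (pathGraph 5) ![a,b,c,d,e]
  · constructor
    · intro i j hij; fin_cases i <;> fin_cases j <;> first | rfl | exact absurd hij (by assumption)
    · intro x
      rcases hsurj x with rfl|rfl|rfl|rfl|rfl
      exacts [⟨0, rfl⟩, ⟨1, rfl⟩, ⟨2, rfl⟩, ⟨3, rfl⟩, ⟨4, rfl⟩]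
  · intro i j
    fin_cases i <;> fin_cases j <;>
      first
        | exact iff_of_true (by assumption) (by simp [pathGraph_adj] <;> decide)
        | exact iff_of_false (by first | exact G.irrefl | assumption) (by simp [pathGraph_adj] <;> decide)

lemma isoHammer {V : Type*} (G : SimpleGraph V) (a b c d e : V)
    (e01 : G.Adj a b) (e02 : G.Adj a c) (n03 : ¬ G.Adj a d) (n04 : ¬ G.Adj a e) (e12 : G.Adj b c) (n13 : ¬ G.Adj b d) (n14 : ¬ G.Adj b e) (e23 : G.Adj c d) (n24 : ¬ G.Adj c e) (e34 : G.Adj d e) (d01 : a ≠ b) (d02 : a ≠ c) (d03 : a ≠ d) (d04 : a ≠ e) (d12 : b ≠ c) (d13 : b ≠ d) (d14 : b ≠ e) (d23 : c ≠ d) (d24 : c ≠ e) (d34 : d ≠ e)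
    (hsurj : ∀ x : V, x = a ∨ x = b ∨ x = c ∨ x = d ∨ x = e) : Nonempty (G ≃g hammerGraph) := by
  have e10 : G.Adj b a := e01.symm
  have d10 : b ≠ a := d01.symm
  have e20 : G.Adj c a := e02.symm
  have d20 : c ≠ a := d02.symm
  have n30 : ¬ G.Adj d a := fun h => n03 h.symm
  have d30 : d ≠ a := d03.symm
  have n40 : ¬ G.Adj e a := fun h => n04 h.symm
  have d40 : e ≠ a := d04.symm
  have e21 : G.Adj c b := e12.symm
  have d21 : c ≠ b := d12.symm
  have n31 : ¬ G.Adj d b := fun h => n13 h.symm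
  have d31 : d ≠ b := d13.symm
  have n41 : ¬ G.Adj e b := fun h => n14 h.symm
  have d41 : e ≠ b := d14.symm
  have e32 : G.Adj d c := e23.symm
  have d32 : d ≠ c := d23.symm
  have n42 : ¬ G.Adj e c := fun h => n24 h.symm
  have d42 : e ≠ c := d24.symm
  have e43 : G.Adj e d := e34.symm
  have d43 : e ≠ d := d34.symm
  apply iso_of_map G hammerGraph ![a,b,c,d,e]
  · constructor
    · intro i j hij; fin_cases i <;> fin_cases j <;> first | rfl | exact absurd hij (by assumption)
    · intro x
      rcases hsurj x with rfl|rfl|rfl|rfl|rfl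
      exacts [⟨0, rfl⟩, ⟨1, rfl⟩, ⟨2, rfl⟩, ⟨3, rfl⟩, ⟨4, rfl⟩]
  · intro i j
    fin_cases i <;> fin_cases j <;>
      first
        | exact iff_of_true (by assumption) (by simp [hammerGraph] <;> decide)
        | exact iff_of_false (by first | exact G.irrefl | assumption) (by simp [hammerGraph] <;> decide)

lemma isoButterfly {V : Type*} (G : SimpleGraph V) (a b c d e : V)
    (e01 : G.Adj a b) (e02 : G.Adj a c) (n03 : ¬ G.Adj a d) (n04 : ¬ G.Adj a e) (e12 : G.Adj b c) (n13 : ¬ G.Adj b d) (n14 : ¬ G.Adj b e) (e23 : G.Adj c d) (e24 : G.Adj c e) (e34 : G.Adj d e) (d01 : a ≠ b) (d02 : a ≠ c) (d03 : a ≠ d) (d04 : a ≠ e) (d12 : b ≠ c) (d13 : b ≠ d) (d14 : b ≠ e) (d23 : c ≠ d) (d24 : c ≠ e) (d34 : d ≠ e)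
    (hsurj : ∀ x : V, x = a ∨ x = b ∨ x = c ∨ x = d ∨ x = e) : Nonempty (G ≃g butterflyGraph) := by
  have e10 : G.Adj b a := e01.symm
  have d10 : b ≠ a := d01.symm
  have e20 : G.Adj c a := e02.symm
  have d20 : c ≠ a := d02.symm
  have n30 : ¬ G.Adj d a := fun h => n03 h.symm
  have d30 : d ≠ a := d03.symm
  have n40 : ¬ G.Adj e a := fun h => n04 h.symm
  have d40 : e ≠ a := d04.symm
  have e21 : G.Adj c b := e12.symm
  have d21 : c ≠ b := d12.symm
  have n31 : ¬ G.Adj d b := fun h => n13 h.symm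
  have d31 : d ≠ b := d13.symm
  have n41 : ¬ G.Adj e b := fun h => n14 h.symm
  have d41 : e ≠ b := d14.symm
  have e32 : G.Adj d c := e23.symm
  have d32 : d ≠ c := d23.symm
  have e42 : G.Adj e c := e24.symm
  have d42 : e ≠ c := d24.symm
  have e43 : G.Adj e d := e34.symm
  have d43 : e ≠ d := d34.symm
  apply iso_of_map G butterflyGraph ![a,b,c,d,e]
  · constructor
    · intro i j hij; fin_cases i <;> fin_cases j <;> first | rfl | exact absurd hij (by assumption)
    · intro x
      rcases hsurj x with rfl|rfl|rfl|rfl|rfl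
      exacts [⟨0, rfl⟩, ⟨1, rfl⟩, ⟨2, rfl⟩, ⟨3, rfl⟩, ⟨4, rfl⟩]
  · intro i j
    fin_cases i <;> fin_cases j <;>
      first
        | exact iff_of_true (by assumption) (by simp [butterflyGraph] <;> decide)
        | exact iff_of_false (by first | exact G.irrefl | assumption) (by simp [butterflyGraph] <;> decide)

lemma isoC6 {V : Type*} (G : SimpleGraph V) (a b c d e f : V)
    (e01 : G.Adj a b) (n02 : ¬ G.Adj a c) (n03 : ¬ G.Adj a d) (n04 : ¬ G.Adj a e) (e05 : G.Adj a f) (e12 : G.Adj b c) (n13 : ¬ G.Adj b d) (n14 : ¬ G.Adj b e) (n15 : ¬ G.Adj b f) (e23 : G.Adj c d) (n24 : ¬ G.Adj c e) (n25 : ¬ G.Adj c f) (e34 : G.Adj d e) (n35 : ¬ G.Adj d f) (e45 : G.Adj e f) (d01 : a ≠ b) (d02 : a ≠ c) (d03 : a ≠ d) (d04 : a ≠ e) (d05 : a ≠ f) (d12 : b ≠ c) (d13 : b ≠ d) (d14 : b ≠ e) (d15 : b ≠ f) (d23 : c ≠ d) (d24 : c ≠ e) (d25 : c ≠ f) (d34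 : d ≠ e) (d35 : d ≠ f) (d45 : e ≠ f)
    (hsurj : ∀ x : V, x = a ∨ x = b ∨ x = c ∨ x = d ∨ x = e ∨ x = f) : Nonempty (G ≃g (cycleGraph 6)) := by
  have e10 : G.Adj b a := e01.symm
  have d10 : b ≠ a := d01.symm
  have n20 : ¬ G.Adj c a := fun h => n02 h.symm
  have d20 : c ≠ a := d02.symm
  have n30 : ¬ G.Adj d a := fun h => n03 h.symm
  have d30 : d ≠ a := d03.symm
  have n40 : ¬ G.Adj e a := fun h => n04 h.symm
  have d40 : e ≠ a := d04.symm
  have e50 : G.Adj f a := e05.symm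
  have d50 : f ≠ a := d05.symm
  have e21 : G.Adj c b := e12.symm
  have d21 : c ≠ b := d12.symm
  have n31 : ¬ G.Adj d b := fun h => n13 h.symm
  have d31 : d ≠ b := d13.symm
  have n41 : ¬ G.Adj e b := fun h => n14 h.symm
  have d41 : e ≠ b := d14.symm
  have n51 : ¬ G.Adj f b := fun h => n15 h.symm
  have d51 : f ≠ b := d15.symm
  have e32 : G.Adj d c := e23.symm
  have d32 : d ≠ c := d23.symm
  have n42 : ¬ G.Adj e c := fun h => n24 h.symm
  have d42 : e ≠ c := d24.symm
  have n52 : ¬ G.Adj f c := fun h => n25 h.symm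
  have d52 : f ≠ c := d25.symm
  have e43 : G.Adj e d := e34.symm
  have d43 : e ≠ d := d34.symm
  have n53 : ¬ G.Adj f d := fun h => n35 h.symm
  have d53 : f ≠ d := d35.symm
  have e54 : G.Adj f e := e45.symm
  have d54 : f ≠ e := d45.symm
  apply iso_of_map G (cycleGraph 6) ![a,b,c,d,e,f]
  · constructor
    · intro i j hij; fin_cases i <;> fin_cases j <;> first | rfl | exact absurd hij (by assumption)
    · intro x
      rcases hsurj x with rfl|rfl|rfl|rfl|rfl|rfl
      exacts [⟨0, rfl⟩, ⟨1, rfl⟩, ⟨2, rfl⟩, ⟨3, rfl⟩, ⟨4, rfl⟩, ⟨5, rfl⟩]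
  · intro i j
    fin_cases i <;> fin_cases j <;>
      first
        | exact iff_of_true (by assumption) (by simp [cycleGraph_adj] <;> decide)
        | exact iff_of_false (by first | exact G.irrefl | assumption) (by simp [cycleGraph_adj] <;> decide)

section ContractLemmas
variable {V : Type*} {G : SimpleGraph V}

lemma contract_outside {a b c d u v : V}
    (hab : G.Adj a b) (hcd : G.Adj c d)
    (hac : ¬G.Adj a c) (had : ¬G.Adj a d) (hbc : ¬G.Adj b c) (hbd : ¬G.Adj b d)
    (hau : a ≠ u) (hbu : b ≠ u) (hcu : c ≠ u) (hdu : d ≠ u)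
    (hav : a ≠ v) (hbv : b ≠ v) (hcv : c ≠ v) (hdv : d ≠ v) :
    (G.contractEdge u v).HasInduced twoK2 := by
  apply has2K2 _ ⟨a, hav⟩ ⟨b, hbv⟩ ⟨c, hcv⟩ ⟨d, hdv⟩
  · exact ⟨fun h => hab.ne (congrArg Subtype.val h), Or.inl hab⟩
  · exact ⟨fun h => hcd.ne (congrArg Subtype.val h), Or.inl hcd⟩
  · rintro ⟨-, h | ⟨h1, h2⟩ | ⟨h1, h2⟩⟩
    exacts [hac h, hau h1, hcu h1]
  · rintro ⟨-, h | ⟨h1, h2⟩ | ⟨h1, h2⟩⟩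
    exacts [had h, hau h1, hdu h1]
  · rintro ⟨-, h | ⟨h1, h2⟩ | ⟨h1, h2⟩⟩
    exacts [hbc h, hbu h1, hcu h1]
  · rintro ⟨-, h | ⟨h1, h2⟩ | ⟨h1, h2⟩⟩
    exacts [hbd h, hbu h1, hdu h1]

/-- Contracting a vertex `w` (whose only neighbours among `{a,b,c,d}` avoid `{c,d}`)
into its neighbour `a` keeps the induced `2K₂`. -/
lemma contract_pendant {a b c d w : V}
    (hab : G.Adj a b) (hcd : G.Adj c d)
    (hac : ¬G.Adj a c) (had : ¬G.Adj a d) (hbc : ¬G.Adj b c) (hbd : ¬G.Adj b d)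
    (hwc : ¬G.Adj w c) (hwd : ¬G.Adj w d)
    (haw : a ≠ w) (hbw : b ≠ w) (hcw : c ≠ w) (hdw : d ≠ w) :
    (G.contractEdge a w).HasInduced twoK2 := by
  have nac : a ≠ c := by rintro rfl; exact had hcd
  have nad : a ≠ d := by rintro rfl; exact hac hcd.symm
  apply has2K2 _ ⟨a, haw⟩ ⟨b, hbw⟩ ⟨c, hcw⟩ ⟨d, hdw⟩
  · exact ⟨fun h => hab.ne (congrArg Subtype.val h), Or.inl hab⟩
  · exact ⟨fun h => hcd.ne (congrArg Subtype.val h), Or.inl hcd⟩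
  · rintro ⟨-, h | ⟨h1, h2⟩ | ⟨h1, h2⟩⟩
    exacts [hac h, hwc h2, nac h1.symm]
  · rintro ⟨-, h | ⟨h1, h2⟩ | ⟨h1, h2⟩⟩
    exacts [had h, hwd h2, nad h1.symm]
  · rintro ⟨-, h | ⟨h1, h2⟩ | ⟨h1, h2⟩⟩
    exacts [hbc h, hab.ne h1.symm, nac h1.symm]
  · rintro ⟨-, h | ⟨h1, h2⟩ | ⟨h1, h2⟩⟩
    exacts [hbd h, hab.ne h1.symm, nad h1.symm]

/-- If `w, w'` are two nonadjacent vertices sharing the neighbour `x`, each having a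
neighbour in `{c, d}` while `x` has none, then contracting `cd` yields an induced `C₄`. -/
lemma contract_share {x w w' c d : V}
    (hxw : G.Adj x w) (hxw' : G.Adj x w') (hww' : ¬G.Adj w w') (nww' : w ≠ w')
    (hxc : ¬G.Adj x c) (hxd : ¬G.Adj x d)
    (hwcd : G.Adj w c ∨ G.Adj w d) (hw'cd : G.Adj w' c ∨ G.Adj w' d)
    (nxc : x ≠ c) (nxd : x ≠ d) (nwc : w ≠ c) (nwd : w ≠ d) (nw'c : w' ≠ c) (nw'd : w' ≠ d)
    (ncd : c ≠ d) :
    (G.contractEdge c d).HasInduced (cycleGraph 4) := by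
  apply hasC4 _ ⟨x, nxd⟩ ⟨w, nwd⟩ ⟨c, ncd⟩ ⟨w', nw'd⟩
  · exact ⟨fun h => hxw.ne (congrArg Subtype.val h), Or.inl hxw⟩
  · refine ⟨fun h => nwc (congrArg Subtype.val h), ?_⟩
    rcases hwcd with h | h
    · exact Or.inl h
    · exact Or.inr (Or.inr ⟨rfl, h.symm⟩)
  · refine ⟨fun h => nw'c (congrArg Subtype.val h).symm, ?_⟩
    rcases hw'cd with h | h
    · exact Or.inl h.symm
    · exact Or.inr (Or.inl ⟨rfl, h.symm⟩)
  · exact ⟨fun h => hxw'.ne (congrArg Subtype.val h).symm, Or.inl hxw'.symm⟩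
  · rintro ⟨-, h | ⟨h1, h2⟩ | ⟨h1, h2⟩⟩
    exacts [hxc h, nxc h1, hxd h2.symm]
  · rintro ⟨-, h | ⟨h1, h2⟩ | ⟨h1, h2⟩⟩
    exacts [hww' h, nwc h1, nw'c h1]
  · exact fun h => nxc (congrArg Subtype.val h)
  · exact fun h => nww' (congrArg Subtype.val h)

end ContractLemmas

lemma c6_case {V : Type*} (G : SimpleGraph V) (a b c d w w' : V)
    (hab : G.Adj a b) (hcd : G.Adj c d)
    (hac : ¬G.Adj a c) (had : ¬G.Adj a d) (hbc : ¬G.Adj b c) (hbd : ¬G.Adj b d)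
    (hwa : G.Adj w a) (hwc : G.Adj w c) (hw'b : G.Adj w' b) (hw'd : G.Adj w' d)
    (hwb : ¬G.Adj w b) (hwd : ¬G.Adj w d) (hw'a : ¬G.Adj w' a) (hw'c : ¬G.Adj w' c)
    (hww' : ¬G.Adj w w')
    (nwa : w ≠ a) (nwb : w ≠ b) (nwc : w ≠ c) (nwd : w ≠ d)
    (nw'a : w' ≠ a) (nw'b : w' ≠ b) (nw'c : w' ≠ c) (nw'd : w' ≠ d) (nww' : w ≠ w')
    (hsurj : ∀ x : V, x = a ∨ x = b ∨ x = c ∨ x = d ∨ x = w ∨ x = w') :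
    Nonempty (G ≃g cycleGraph 6) := by
  have nab : a ≠ b := hab.ne
  have ncd : c ≠ d := hcd.ne
  have nac : a ≠ c := by rintro rfl; exact had hcd
  have nad : a ≠ d := by rintro rfl; exact hac hcd.symm
  have nbc : b ≠ c := by rintro rfl; exact hbd hcd
  have nbd : b ≠ d := by rintro rfl; exact hbc hcd.symm
  exact isoC6 G a w c d w' b
    hwa.symm hac had (fun h => hw'a h.symm) hab
    hwc hwd hww' hwb
    hcd (fun h => hw'c h.symm) (fun h => hbc h.symm)
    hw'd.symm (fun h => hbd h.symm)
    hw'b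
    nwa.symm nac nad nw'a.symm nab
    nwc nwd nww' nwb
    ncd nw'c.symm nbc.symm
    nw'd.symm nbd.symm
    nw'b
    (fun x => by rcases hsurj x with h|h|h|h|h|h <;> tauto)

set_option maxHeartbeats 1600000 in
/-- Lemma 8. If a connected graph `G` has an induced `2K₂`, then
either `G` is isomorphic to `2K₂`, `P₅`, the hammer, the butterfly, or `C₆`, or some
edge contraction of `G` has an induced `2K₂` or an induced `C₄`. -/
theorem stmt6 {V : Type*} [Fintype V] [DecidableEq V] (G : SimpleGraph V)
    (hG : G.Connected) (h2K2 : G.HasInduced twoK2) :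
    Nonempty (G ≃g twoK2) ∨ Nonempty (G ≃g pathGraph 5) ∨
    Nonempty (G ≃g hammerGraph) ∨ Nonempty (G ≃g butterflyGraph) ∨
    Nonempty (G ≃g cycleGraph 6) ∨
    ∃ u v : V, G.Adj u v ∧
      ((G.contractEdge u v).HasInduced twoK2 ∨
        (G.contractEdge u v).HasInduced (cycleGraph 4)) := by
  classical
  obtain ⟨S, ⟨φ⟩⟩ := h2K2
  have hadj : ∀ i j, G.Adj ((φ.symm i : ↥S) : V) ((φ.symm j : ↥S) : V) ↔ twoK2.Adj i j :=
    fun i j => φ.symm.map_adj_iff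
  set a : V := ((φ.symm 0 : ↥S) : V) with hadef
  set b : V := ((φ.symm 1 : ↥S) : V) with hbdef
  set c : V := ((φ.symm 2 : ↥S) : V) with hcdef
  set d : V := ((φ.symm 3 : ↥S) : V) with hddef
  have haS : a ∈ S := (φ.symm 0).2
  have hbS : b ∈ S := (φ.symm 1).2
  have hcS : c ∈ S := (φ.symm 2).2
  have hdS : d ∈ S := (φ.symm 3).2
  have hab : G.Adj a b := (hadj 0 1).2 (by simp [twoK2])
  have hcd : G.Adj c d := (hadj 2 3).2 (by simp [twoK2])
  have hac : ¬G.Adj a c := fun h => by simpa [twoK2] using (hadj 0 2).1 h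
  have had : ¬G.Adj a d := fun h => by simpa [twoK2] using (hadj 0 3).1 h
  have hbc : ¬G.Adj b c := fun h => by simpa [twoK2] using (hadj 1 2).1 h
  have hbd : ¬G.Adj b d := fun h => by simpa [twoK2] using (hadj 1 3).1 h
  have hca : ¬G.Adj c a := fun h => hac h.symm
  have hda : ¬G.Adj d a := fun h => had h.symm
  have hcb : ¬G.Adj c b := fun h => hbc h.symm
  have hdb : ¬G.Adj d b := fun h => hbd h.symm
  have nab : a ≠ b := hab.ne
  have ncd : c ≠ d := hcd.ne
  have nac : a ≠ c := by rintro h; exact had (h ▸ hcd)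
  have nad : a ≠ d := by rintro h; exact hac (h ▸ hcd.symm)
  have nbc : b ≠ c := by rintro h; exact hbd (h ▸ hcd)
  have nbd : b ≠ d := by rintro h; exact hbc (h ▸ hcd.symm)
  have hS : ∀ x, x ∈ S → x = a ∨ x = b ∨ x = c ∨ x = d := by
    intro x hx
    have h0 : φ.symm (φ ⟨x, hx⟩) = ⟨x, hx⟩ := φ.toEquiv.symm_apply_apply ⟨x, hx⟩
    have h1 : x = ((φ.symm (φ ⟨x, hx⟩) : ↥S) : V) := (congrArg Subtype.val h0).symm
    generalize hi : φ ⟨x, hx⟩ = i at h1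
    fin_cases i
    · exact Or.inl h1
    · exact Or.inr (Or.inl h1)
    · exact Or.inr (Or.inr (Or.inl h1))
    · exact Or.inr (Or.inr (Or.inr h1))
  have hnb : ∀ x : V, x ∉ S → ∃ z, G.Adj x z := by
    intro x hx
    have hxa : x ≠ a := fun h => hx (h ▸ haS)
    obtain ⟨p⟩ := hG.preconnected x a
    exact ⟨p.getVert 1, p.adj_snd (SimpleGraph.Walk.not_nil_of_ne hxa)⟩
  by_cases h1 : ∃ u v : V, G.Adj u v ∧ u ∉ S ∧ v ∉ S
  · obtain ⟨u, v, huv, hu, hv⟩ := h1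
    refine Or.inr (Or.inr (Or.inr (Or.inr (Or.inr ⟨u, v, huv, Or.inl ?_⟩))))
    exact contract_outside hab hcd hac had hbc hbd
      (fun h => hu (h ▸ haS)) (fun h => hu (h ▸ hbS)) (fun h => hu (h ▸ hcS))
      (fun h => hu (h ▸ hdS)) (fun h => hv (h ▸ haS)) (fun h => hv (h ▸ hbS))
      (fun h => hv (h ▸ hcS)) (fun h => hv (h ▸ hdS))
  · have houts : ∀ z y : V, z ∉ S → G.Adj z y → y ∈ S := by
      intro z y hz hzy
      by_contra hy
      exact h1 ⟨z, y, hzy, hz, hy⟩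
    by_cases h2 : ∃ w, w ∉ S ∧ ((¬G.Adj w c ∧ ¬G.Adj w d) ∨ (¬G.Adj w a ∧ ¬G.Adj w b))
    · obtain ⟨w, hw, hcase⟩ := h2
      refine Or.inr (Or.inr (Or.inr (Or.inr (Or.inr ?_))))
      have nwa : w ≠ a := fun h => hw (h ▸ haS)
      have nwb : w ≠ b := fun h => hw (h ▸ hbS)
      have nwc : w ≠ c := fun h => hw (h ▸ hcS)
      have nwd : w ≠ d := fun h => hw (h ▸ hdS)
      obtain ⟨z, hz⟩ := hnb w hw
      have hzS := hS z (houts w z hw hz)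
      rcases hcase with ⟨hwc, hwd⟩ | ⟨hwa, hwb⟩
      · rcases hzS with h | h | h | h <;> rw [h] at hz
        · exact ⟨a, w, hz.symm, Or.inl (contract_pendant hab hcd hac had hbc hbd hwc hwd
            nwa.symm nwb.symm nwc.symm nwd.symm)⟩
        · exact ⟨b, w, hz.symm, Or.inl (contract_pendant hab.symm hcd hbc hbd hac had hwc hwd
            nwb.symm nwa.symm nwc.symm nwd.symm)⟩
        · exact absurd hz hwc
        · exact absurd hz hwd
      · rcases hzS with h | h | h | h <;> rw [h] at hz
        · exact absurd hz hwa
        · exact absurd hz hwb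
        · exact ⟨c, w, hz.symm, Or.inl (contract_pendant hcd hab hca hcb hda hdb hwa hwb
            nwc.symm nwd.symm nwa.symm nwb.symm)⟩
        · exact ⟨d, w, hz.symm, Or.inl (contract_pendant hcd.symm hab hda hdb hca hcb hwa hwb
            nwd.symm nwc.symm nwa.symm nwb.symm)⟩
    · have hside : ∀ z, z ∉ S → (G.Adj z a ∨ G.Adj z b) ∧ (G.Adj z c ∨ G.Adj z d) := by
        intro z hz
        constructor
        · by_contra hcon; push_neg at hcon; exact h2 ⟨z, hz, Or.inr hcon⟩
        · by_contra hcon; push_neg at hcon; exact h2 ⟨z, hz, Or.inl hcon⟩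
      by_cases h3 : ∃ w w' : V, w ∉ S ∧ w' ∉ S ∧ w ≠ w' ∧
          ((G.Adj a w ∧ G.Adj a w') ∨ (G.Adj b w ∧ G.Adj b w') ∨
           (G.Adj c w ∧ G.Adj c w') ∨ (G.Adj d w ∧ G.Adj d w'))
      · obtain ⟨w, w', hw, hw', hne, hcase⟩ := h3
        refine Or.inr (Or.inr (Or.inr (Or.inr (Or.inr ?_))))
        have hww' : ¬G.Adj w w' := fun h => h1 ⟨w, w', h, hw, hw'⟩
        have nwa : w ≠ a := fun h => hw (h ▸ haS)
        have nwb : w ≠ b := fun h => hw (h ▸ hbS)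
        have nwc : w ≠ c := fun h => hw (h ▸ hcS)
        have nwd : w ≠ d := fun h => hw (h ▸ hdS)
        have nw'a : w' ≠ a := fun h => hw' (h ▸ haS)
        have nw'b : w' ≠ b := fun h => hw' (h ▸ hbS)
        have nw'c : w' ≠ c := fun h => hw' (h ▸ hcS)
        have nw'd : w' ≠ d := fun h => hw' (h ▸ hdS)
        rcases hcase with ⟨hx1, hx2⟩ | ⟨hx1, hx2⟩ | ⟨hx1, hx2⟩ | ⟨hx1, hx2⟩
        · exact ⟨c, d, hcd, Or.inr (contract_share hx1 hx2 hww' hne hac had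
            (hside w hw).2 (hside w' hw').2 nac nad nwc nwd nw'c nw'd ncd)⟩
        · exact ⟨c, d, hcd, Or.inr (contract_share hx1 hx2 hww' hne hbc hbd
            (hside w hw).2 (hside w' hw').2 nbc nbd nwc nwd nw'c nw'd ncd)⟩
        · exact ⟨a, b, hab, Or.inr (contract_share hx1 hx2 hww' hne hca hcb
            (hside w hw).1 (hside w' hw').1 nac.symm nbc.symm nwa nwb nw'a nw'b nab)⟩
        · exact ⟨a, b, hab, Or.inr (contract_share hx1 hx2 hww' hne hda hdb
            (hside w hw).1 (hside w' hw').1 nad.symm nbd.symm nwa nwb nw'a nw'b nab)⟩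
      · by_cases h4 : ∀ x : V, x ∈ S
        · exact Or.inl (iso2K2 G a b c d hab hac had hbc hbd hcd nab nac nad nbc nbd ncd
            (fun x => hS x (h4 x)))
        · push_neg at h4
          obtain ⟨w, hw⟩ := h4
          have nwa : w ≠ a := fun h => hw (h ▸ haS)
          have nwb : w ≠ b := fun h => hw (h ▸ hbS)
          have nwc : w ≠ c := fun h => hw (h ▸ hcS)
          have nwd : w ≠ d := fun h => hw (h ▸ hdS)
          by_cases h5 : ∃ w', w' ∉ S ∧ w' ≠ w
          · obtain ⟨w', hw', hne'⟩ := h5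
            refine Or.inr (Or.inr (Or.inr (Or.inr (Or.inl ?_))))
            have nww' : w ≠ w' := fun h => hne' h.symm
            have hww' : ¬G.Adj w w' := fun h => h1 ⟨w, w', h, hw, hw'⟩
            have nw'a : w' ≠ a := fun h => hw' (h ▸ haS)
            have nw'b : w' ≠ b := fun h => hw' (h ▸ hbS)
            have nw'c : w' ≠ c := fun h => hw' (h ▸ hcS)
            have nw'd : w' ≠ d := fun h => hw' (h ▸ hdS)
            have honly : ∀ x, x ∉ S → x = w ∨ x = w' := by
              intro x hx
              by_contra hcon
              push_neg at hcon
              obtain ⟨hxw, hxw'⟩ := hcon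
              rcases (hside w hw).1 with h1' | h1' <;> rcases (hside w' hw').1 with h2' | h2' <;>
                rcases (hside x hx).1 with h3' | h3' <;>
                first
                  | exact h3 ⟨w, w', hw, hw', nww', Or.inl ⟨h1'.symm, h2'.symm⟩⟩
                  | exact h3 ⟨w, w', hw, hw', nww', Or.inr (Or.inl ⟨h1'.symm, h2'.symm⟩)⟩
                  | exact h3 ⟨w, x, hw, hx, (fun h => hxw h.symm), Or.inl ⟨h1'.symm, h3'.symm⟩⟩
                  | exact h3 ⟨w, x, hw, hx, (fun h => hxw h.symm), Or.inr (Or.inl ⟨h1'.symm, h3'.symm⟩)⟩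
                  | exact h3 ⟨w', x, hw', hx, (fun h => hxw' h.symm), Or.inl ⟨h2'.symm, h3'.symm⟩⟩
                  | exact h3 ⟨w', x, hw', hx, (fun h => hxw' h.symm), Or.inr (Or.inl ⟨h2'.symm, h3'.symm⟩)⟩
            have hsurj6 : ∀ x : V, x = a ∨ x = b ∨ x = c ∨ x = d ∨ x = w ∨ x = w' := by
              intro x
              by_cases hx : x ∈ S
              · have := hS x hx; tauto
              · have := honly x hx; tauto
            rcases (hside w hw).1 with hwa | hwb
            · rcases (hside w' hw').1 with hw'a | hw'b
              · exact (h3 ⟨w, w', hw, hw', nww', Or.inl ⟨hwa.symm, hw'a.symm⟩⟩).elim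
              · have hwb : ¬G.Adj w b := fun h =>
                  h3 ⟨w, w', hw, hw', nww', Or.inr (Or.inl ⟨h.symm, hw'b.symm⟩)⟩
                have hw'a : ¬G.Adj w' a := fun h =>
                  h3 ⟨w, w', hw, hw', nww', Or.inl ⟨hwa.symm, h.symm⟩⟩
                rcases (hside w hw).2 with hwc | hwd
                · rcases (hside w' hw').2 with hw'c | hw'd
                  · exact (h3 ⟨w, w', hw, hw', nww',
                      Or.inr (Or.inr (Or.inl ⟨hwc.symm, hw'c.symm⟩))⟩).elim
                  · have hwd : ¬G.Adj w d := fun h =>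
                      h3 ⟨w, w', hw, hw', nww', Or.inr (Or.inr (Or.inr ⟨h.symm, hw'd.symm⟩))⟩
                    have hw'c : ¬G.Adj w' c := fun h =>
                      h3 ⟨w, w', hw, hw', nww', Or.inr (Or.inr (Or.inl ⟨hwc.symm, h.symm⟩))⟩
                    exact c6_case G a b c d w w' hab hcd hac had hbc hbd hwa hwc hw'b hw'd
                      hwb hwd hw'a hw'c hww' nwa nwb nwc nwd nw'a nw'b nw'c nw'd nww' hsurj6
                · rcases (hside w' hw').2 with hw'c | hw'd
                  · have hwc : ¬G.Adj w c := fun h =>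
                      h3 ⟨w, w', hw, hw', nww', Or.inr (Or.inr (Or.inl ⟨h.symm, hw'c.symm⟩))⟩
                    have hw'd : ¬G.Adj w' d := fun h =>
                      h3 ⟨w, w', hw, hw', nww', Or.inr (Or.inr (Or.inr ⟨hwd.symm, h.symm⟩))⟩
                    exact c6_case G a b d c w w' hab hcd.symm had hac hbd hbc hwa hwd hw'b hw'c
                      hwb hwc hw'a hw'd hww' nwa nwb nwd nwc nw'a nw'b nw'd nw'c nww'
                      (fun x => by rcases hsurj6 x with h|h|h|h|h|h; exacts [Or.inl h, Or.inr (Or.inl h), Or.inr (Or.inr (Or.inr (Or.inl h))), Or.inr (Or.inr (Or.inl h)), Or.inr (Or.inr (Or.inr (Or.inr (Or.inl h)))), Or.inr (Or.inr (Or.inr (Or.inr (Or.inr h))))])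
                  · exact (h3 ⟨w, w', hw, hw', nww',
                      Or.inr (Or.inr (Or.inr ⟨hwd.symm, hw'd.symm⟩))⟩).elim
            · rcases (hside w' hw').1 with hw'a | hw'b
              · have hwa : ¬G.Adj w a := fun h =>
                  h3 ⟨w, w', hw, hw', nww', Or.inl ⟨h.symm, hw'a.symm⟩⟩
                have hw'b : ¬G.Adj w' b := fun h =>
                  h3 ⟨w, w', hw, hw', nww', Or.inr (Or.inl ⟨hwb.symm, h.symm⟩)⟩
                rcases (hside w hw).2 with hwc | hwd
                · rcases (hside w' hw').2 with hw'c | hw'd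
                  · exact (h3 ⟨w, w', hw, hw', nww',
                      Or.inr (Or.inr (Or.inl ⟨hwc.symm, hw'c.symm⟩))⟩).elim
                  · have hwd : ¬G.Adj w d := fun h =>
                      h3 ⟨w, w', hw, hw', nww', Or.inr (Or.inr (Or.inr ⟨h.symm, hw'd.symm⟩))⟩
                    have hw'c : ¬G.Adj w' c := fun h =>
                      h3 ⟨w, w', hw, hw', nww', Or.inr (Or.inr (Or.inl ⟨hwc.symm, h.symm⟩))⟩
                    exact c6_case G b a c d w w' hab.symm hcd hbc hbd hac had hwb hwc hw'a hw'd
                      hwa hwd hw'b hw'c hww' nwb nwa nwc nwd nw'b nw'a nw'c nw'd nww'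
                      (fun x => by rcases hsurj6 x with h|h|h|h|h|h; exacts [Or.inr (Or.inl h), Or.inl h, Or.inr (Or.inr (Or.inl h)), Or.inr (Or.inr (Or.inr (Or.inl h))), Or.inr (Or.inr (Or.inr (Or.inr (Or.inl h)))), Or.inr (Or.inr (Or.inr (Or.inr (Or.inr h))))])
                · rcases (hside w' hw').2 with hw'c | hw'd
                  · have hwc : ¬G.Adj w c := fun h =>
                      h3 ⟨w, w', hw, hw', nww', Or.inr (Or.inr (Or.inl ⟨h.symm, hw'c.symm⟩))⟩
                    have hw'd : ¬G.Adj w' d := fun h =>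
                      h3 ⟨w, w', hw, hw', nww', Or.inr (Or.inr (Or.inr ⟨hwd.symm, h.symm⟩))⟩
                    exact c6_case G b a d c w w' hab.symm hcd.symm hbd hbc had hac hwb hwd hw'a
                      hw'c hwa hwc hw'b hw'd hww' nwb nwa nwd nwc nw'b nw'a nw'd nw'c nww'
                      (fun x => by rcases hsurj6 x with h|h|h|h|h|h; exacts [Or.inr (Or.inl h), Or.inl h, Or.inr (Or.inr (Or.inr (Or.inl h))), Or.inr (Or.inr (Or.inl h)), Or.inr (Or.inr (Or.inr (Or.inr (Or.inl h)))), Or.inr (Or.inr (Or.inr (Or.inr (Or.inr h))))])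
                  · exact (h3 ⟨w, w', hw, hw', nww',
                      Or.inr (Or.inr (Or.inr ⟨hwd.symm, hw'd.symm⟩))⟩).elim
              · exact (h3 ⟨w, w', hw, hw', nww', Or.inr (Or.inl ⟨hwb.symm, hw'b.symm⟩)⟩).elim
          · have honly1 : ∀ x, x ∉ S → x = w := by
              intro x hx
              by_contra hcon
              exact h5 ⟨x, hx, hcon⟩
            have hsurj5 : ∀ x : V, x = a ∨ x = b ∨ x = c ∨ x = d ∨ x = w := by
              intro x
              by_cases hx : x ∈ S
              · have := hS x hx; tauto
              · have := honly1 x hx; tauto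
            by_cases hwa : G.Adj w a <;> by_cases hwb : G.Adj w b <;>
              by_cases hwc : G.Adj w c <;> by_cases hwd : G.Adj w d <;>
      first
        | exact absurd ((hside w hw).1) (not_or.mpr ⟨hwa, hwb⟩)
        | exact absurd ((hside w hw).2) (not_or.mpr ⟨hwc, hwd⟩)
        | exact Or.inr (Or.inr (Or.inr (Or.inl (isoButterfly G a b w c d hab hwa.symm hac had hwb.symm hbc hbd hwc hwd hcd nab nwa.symm nac nad nwb.symm nbc nbd nwc nwd ncd (fun x => by rcases hsurj5 x with h|h|h|h|h; exacts [Or.inl h, Or.inr (Or.inl h), Or.inr (Or.inr (Or.inr (Or.inl h))), Or.inr (Or.inr (Or.inr (Or.inr (h)))), Or.inr (Or.inr (Or.inl h))])))))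
        | exact Or.inr (Or.inr (Or.inl (isoHammer G a b w c d hab hwa.symm hac had hwb.symm hbc hbd hwc hwd hcd nab nwa.symm nac nad nwb.symm nbc nbd nwc nwd ncd (fun x => by rcases hsurj5 x with h|h|h|h|h; exacts [Or.inl h, Or.inr (Or.inl h), Or.inr (Or.inr (Or.inr (Or.inl h))), Or.inr (Or.inr (Or.inr (Or.inr (h)))), Or.inr (Or.inr (Or.inl h))]))))
        | exact Or.inr (Or.inr (Or.inl (isoHammer G a b w d c hab hwa.symm had hac hwb.symm hbd hbc hwd hwc hcd.symm nab nwa.symm nad nac nwb.symm nbd nbc nwd nwc ncd.symm (fun x => by rcases hsurj5 x with h|h|h|h|h; exacts [Or.inl h, Or.inr (Or.inl h), Or.inr (Or.inr (Or.inr (Or.inr (h)))), Or.inr (Or.inr (Or.inr (Or.inl h))), Or.inr (Or.inr (Or.inl h))]))))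
        | exact Or.inr (Or.inr (Or.inl (isoHammer G c d w a b hcd hwc.symm (fun h => hac h.symm) (fun h => hbc h.symm) hwd.symm (fun h => had h.symm) (fun h => hbd h.symm) hwa hwb hab ncd nwc.symm nac.symm nbc.symm nwd.symm nad.symm nbd.symm nwa nwb nab (fun x => by rcases hsurj5 x with h|h|h|h|h; exacts [Or.inr (Or.inr (Or.inr (Or.inl h))), Or.inr (Or.inr (Or.inr (Or.inr (h)))), Or.inl h, Or.inr (Or.inl h), Or.inr (Or.inr (Or.inl h))]))))
        | exact Or.inr (Or.inr (Or.inl (isoHammer G c d w b a hcd hwc.symm (fun h => hbc h.symm) (fun h => hac h.symm) hwd.symm (fun h => hbd h.symm) (fun h => had h.symm) hwb hwa hab.symm ncd nwc.symm nbc.symm nac.symm nwd.symm nbd.symm nad.symm nwb nwa nab.symm (fun x => by rcases hsurj5 x with h|h|h|h|h; exacts [Or.inr (Or.inr (Or.inr (Or.inr (h)))), Or.inr (Or.inr (Or.inr (Or.inl h))), Or.inl h, Or.inr (Or.inl h), Or.inr (Or.inr (Or.inl h))]))))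
        | exact Or.inr (Or.inl (isoPath5 G b a w c d hab.symm (fun h => hwb h.symm) hbc hbd hwa.symm hac had hwc hwd hcd nab.symm nwb.symm nbc nbd nwa.symm nac nad nwc nwd ncd (fun x => by rcases hsurj5 x with h|h|h|h|h; exacts [Or.inr (Or.inl h), Or.inl h, Or.inr (Or.inr (Or.inr (Or.inl h))), Or.inr (Or.inr (Or.inr (Or.inr (h)))), Or.inr (Or.inr (Or.inl h))])))
        | exact Or.inr (Or.inl (isoPath5 G b a w d c hab.symm (fun h => hwb h.symm) hbd hbc hwa.symm had hac hwd hwc hcd.symm nab.symm nwb.symm nbd nbc nwa.symm nad nac nwd nwc ncd.symm (fun x => by rcases hsurj5 x with h|h|h|h|h; exacts [Or.inr (Or.inl h), Or.inl h, Or.inr (Or.inr (Or.inr (Or.inr (h)))), Or.inr (Or.inr (Or.inr (Or.inl h))), Or.inr (Or.inr (Or.inl h))])))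
        | exact Or.inr (Or.inl (isoPath5 G a b w c d hab (fun h => hwa h.symm) hac had hwb.symm hbc hbd hwc hwd hcd nab nwa.symm nac nad nwb.symm nbc nbd nwc nwd ncd (fun x => by rcases hsurj5 x with h|h|h|h|h; exacts [Or.inl h, Or.inr (Or.inl h), Or.inr (Or.inr (Or.inr (Or.inl h))), Or.inr (Or.inr (Or.inr (Or.inr (h)))), Or.inr (Or.inr (Or.inl h))])))
        | exact Or.inr (Or.inl (isoPath5 G a b w d c hab (fun h => hwa h.symm) had hac hwb.symm hbd hbc hwd hwc hcd.symm nab nwa.symm nad nac nwb.symm nbd nbc nwd nwc ncd.symm (fun x => by rcases hsurj5 x with h|h|h|h|h; exacts [Or.inl h, Or.inr (Or.inl h), Or.inr (Or.inr (Or.inr (Or.inr (h)))), Or.inr (Or.inr (Or.inr (Or.inl h))), Or.inr (Or.inr (Or.inl h))])))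
end

section
/- Let G be a connected (2K_2, claw)-free simple graph and let C = {p, q, r, s} ⊆ V(G) be a vertex set inducing a 4-cycle in G with edges pq, qr, rs, sp. If u, v ∉ C are distinct vertices with |N_C(u)| = |N_C(v)| = 2, then u and v are adjacent. -/
open SimpleGraph

/-- The claw `K_{1,3}`. -/
def clawGraph : SimpleGraph (Fin 4) := fromEdgeSet {s(0,1), s(0,2), s(0,3)}

lemma hasInduced_of_fun {V W : Type*} (G : SimpleGraph V) (H : SimpleGraph W)
    (f : W → V) (hf : Function.Injective f)
    (h : ∀ i j, G.Adj (f i) (f j) ↔ H.Adj i j) : G.HasInduced H := by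
  refine ⟨Set.range f, ⟨⟨(Equiv.ofInjective f hf).symm, ?_⟩⟩⟩
  intro a b
  have ha : f ((Equiv.ofInjective f hf).symm a) = a.1 :=
    congrArg Subtype.val ((Equiv.ofInjective f hf).apply_symm_apply a)
  have hb : f ((Equiv.ofInjective f hf).symm b) = b.1 :=
    congrArg Subtype.val ((Equiv.ofInjective f hf).apply_symm_apply b)
  rw [← h, ha, hb]; rfl

lemma claw_from {V : Type*} (G : SimpleGraph V) {a b c d : V}
    (hab : G.Adj a b) (hac : G.Adj a c) (had : G.Adj a d)
    (hbc : ¬ G.Adj b c) (hbd : ¬ G.Adj b d) (hcd : ¬ G.Adj c d)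
    (nbc : b ≠ c) (nbd : b ≠ d) (ncd : c ≠ d) : G.HasInduced clawGraph := by
  have nab := hab.ne; have nac := hac.ne; have nad := had.ne
  apply hasInduced_of_fun G clawGraph ![a,b,c,d]
  · intro i j hij; fin_cases i <;> fin_cases j <;> simp_all
  · intro i j; fin_cases i <;> fin_cases j <;>
      simp [clawGraph, G.adj_comm b a, G.adj_comm c a, G.adj_comm d a,
        G.adj_comm c b, G.adj_comm d b, G.adj_comm d c] <;>
      first
        | exact fun h => absurd h G.irrefl
        | tauto
        | (intro h; simp_all)

lemma twoK2_from {V : Type*} (G : SimpleGraph V) {a b c d : V}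
    (hab : G.Adj a b) (hcd : G.Adj c d)
    (hac : ¬ G.Adj a c) (had : ¬ G.Adj a d) (hbc : ¬ G.Adj b c) (hbd : ¬ G.Adj b d)
    (nac : a ≠ c) (nad : a ≠ d) (nbc : b ≠ c) (nbd : b ≠ d) : G.HasInduced twoK2 := by
  have nab := hab.ne; have ncd := hcd.ne
  apply hasInduced_of_fun G twoK2 ![a,b,c,d]
  · intro i j hij; fin_cases i <;> fin_cases j <;> simp_all
  · intro i j; fin_cases i <;> fin_cases j <;>
      simp [twoK2, G.adj_comm b a, G.adj_comm c a, G.adj_comm d a,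
        G.adj_comm c b, G.adj_comm d b, G.adj_comm d c] <;>
      first
        | exact fun h => absurd h G.irrefl
        | tauto
        | (intro h; simp_all)

set_option maxHeartbeats 1000000 in
lemma two_of_four {V : Type*} [DecidableEq V] {p q r s : V} (hdist : [p, q, r, s].Nodup)
    (P : V → Prop) (h : ({x ∈ ({p, q, r, s} : Set V) | P x}).ncard = 2) :
    (P p ∧ P q ∧ ¬ P r ∧ ¬ P s) ∨ (P q ∧ P r ∧ ¬ P p ∧ ¬ P s) ∨
    (P r ∧ P s ∧ ¬ P p ∧ ¬ P q) ∨ (P s ∧ P p ∧ ¬ P q ∧ ¬ P r) ∨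
    (P p ∧ P r ∧ ¬ P q ∧ ¬ P s) ∨ (P q ∧ P s ∧ ¬ P p ∧ ¬ P r) := by
  classical
  simp only [List.nodup_cons, List.mem_cons, List.not_mem_nil, or_false, List.mem_singleton,
    not_or, List.nodup_nil, and_true] at hdist
  obtain ⟨⟨hpq, hpr, hps⟩, ⟨hqr, hqs⟩, hrs⟩ := hdist
  have e1 : ({x ∈ ({p, q, r, s} : Set V) | P x}) =
      ↑(({p, q, r, s} : Finset V).filter fun x => P x) := by
    ext x; simp
  rw [e1, Set.ncard_coe_finset, Finset.card_filter] at h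
  rw [show ({p, q, r, s} : Finset V) = insert p (insert q (insert r {s})) from rfl] at h
  rw [Finset.sum_insert (by simp [hpq, hpr, hps]),
      Finset.sum_insert (by simp [hqr, hqs]),
      Finset.sum_insert (by simp [hrs]), Finset.sum_singleton] at h
  by_cases h1 : P p <;> by_cases h2 : P q <;> by_cases h3 : P r <;> by_cases h4 : P s <;>
    simp only [h1, h2, h3, h4, if_true, if_false] at h <;> tauto

/-- Claim 12.10. In a connected `(2K₂, claw)`-free graph with an
induced 4-cycle on `C = {p,q,r,s}`, any two distinct vertices outside `C` having exactly
two neighbours in `C` are adjacent. -/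
theorem stmt16 {V : Type*} [Fintype V] [DecidableEq V] (G : SimpleGraph V)
    (hG : G.Connected) (h2K2 : ¬ G.HasInduced twoK2) (hclaw : ¬ G.HasInduced clawGraph)
    (p q r s : V) (hdist : [p, q, r, s].Nodup)
    (hpq : G.Adj p q) (hqr : G.Adj q r) (hrs : G.Adj r s) (hsp : G.Adj s p)
    (hpr : ¬ G.Adj p r) (hqs : ¬ G.Adj q s)
    (u v : V) (hu : u ∉ ({p, q, r, s} : Set V)) (hv : v ∉ ({p, q, r, s} : Set V))
    (huv : u ≠ v)
    (hNu : ({x ∈ ({p, q, r, s} : Set V) | G.Adj u x}).ncard = 2)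
    (hNv : ({x ∈ ({p, q, r, s} : Set V) | G.Adj v x}).ncard = 2) :
    G.Adj u v := by
  by_contra hn
  have hn' : ¬ G.Adj v u := fun h => hn h.symm
  simp only [Set.mem_insert_iff, Set.mem_singleton_iff, not_or] at hu hv
  obtain ⟨hup, huq, hur, hus⟩ := hu
  obtain ⟨hvp, hvq, hvr, hvs⟩ := hv
  have ndist := hdist
  simp only [List.nodup_cons, List.mem_cons, List.not_mem_nil, or_false, List.mem_singleton,
    not_or, List.nodup_nil, and_true] at ndist
  obtain ⟨⟨npq, npr, nps⟩, ⟨nqr, nqs⟩, nrs⟩ := ndist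
  have Hu := two_of_four hdist (G.Adj u) hNu
  have Hv := two_of_four hdist (G.Adj v) hNv
  -- nonadjacency flips
  have flip : ∀ {x y : V}, ¬ G.Adj x y → ¬ G.Adj y x := fun h h' => h h'.symm
  -- eliminate the diagonal cases for u
  rcases Hu with ⟨up, uq, ur', us'⟩ | ⟨uq, ur, up', us'⟩ | ⟨ur, us, up', uq'⟩ |
      ⟨us, up, uq', ur'⟩ | ⟨up, ur, uq', us'⟩ | ⟨uq, us, up', ur'⟩
  rotate_left 4
  · -- u adjacent to p and r : claw at p with q, s, u
    exact absurd (claw_from G hpq hsp.symm up.symm hqs (flip uq') (flip us')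
      nqs (Ne.symm huq) (Ne.symm hus)) hclaw
  · -- u adjacent to q and s : claw at q with p, r, u
    exact absurd (claw_from G hpq.symm hqr uq.symm hpr (flip up') (flip ur')
      npr (Ne.symm hup) (Ne.symm hur)) hclaw
  -- u adjacent to p,q
  · rcases Hv with ⟨vp, vq, vr', vs'⟩ | ⟨vq, vr, vp', vs'⟩ | ⟨vr, vs, vp', vq'⟩ |
        ⟨vs, vp, vq', vr'⟩ | ⟨vp, vr, vq', vs'⟩ | ⟨vq, vs, vp', vr'⟩
    · exact absurd (claw_from G up.symm vp.symm hsp.symm hn us' vs' huv hus hvs) hclaw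
    · exact absurd (twoK2_from G up vr hn ur' (flip vp') hpr
        huv hur (Ne.symm hvp) npr) h2K2
    · exact absurd (twoK2_from G up vr hn ur' (flip vp') hpr
        huv hur (Ne.symm hvp) npr) h2K2
    · exact absurd (twoK2_from G uq vs hn us' (flip vq') hqs
        huv hus (Ne.symm hvq) nqs) h2K2
    · exact absurd (claw_from G vp.symm hpq hsp.symm vq' vs' hqs hvq hvs nqs) hclaw
    · exact absurd (claw_from G vq.symm hpq.symm hqr vp' vr' hpr hvp hvr npr) hclaw
  -- u adjacent to q,r
  · rcases Hv with ⟨vp, vq, vr', vs'⟩ | ⟨vq, vr, vp', vs'⟩ | ⟨vr, vs, vp', vq'⟩ |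
        ⟨vs, vp, vq', vr'⟩ | ⟨vp, vr, vq', vs'⟩ | ⟨vq, vs, vp', vr'⟩
    · exact absurd (twoK2_from G ur vp hn up' (flip vr') (flip hpr)
        huv hup (Ne.symm hvr) (Ne.symm npr)) h2K2
    · exact absurd (claw_from G uq.symm vq.symm hpq.symm hn up' vp' huv hup hvp) hclaw
    · exact absurd (twoK2_from G uq vs hn us' (flip vq') hqs
        huv hus (Ne.symm hvq) nqs) h2K2
    · exact absurd (twoK2_from G uq vs hn us' (flip vq') hqs
        huv hus (Ne.symm hvq) nqs) h2K2
    · exact absurd (claw_from G vp.symm hpq hsp.symm vq' vs' hqs hvq hvs nqs) hclaw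
    · exact absurd (claw_from G vq.symm hpq.symm hqr vp' vr' hpr hvp hvr npr) hclaw
  -- u adjacent to r,s
  · rcases Hv with ⟨vp, vq, vr', vs'⟩ | ⟨vq, vr, vp', vs'⟩ | ⟨vr, vs, vp', vq'⟩ |
        ⟨vs, vp, vq', vr'⟩ | ⟨vp, vr, vq', vs'⟩ | ⟨vq, vs, vp', vr'⟩
    · exact absurd (twoK2_from G ur vp hn up' (flip vr') (flip hpr)
        huv hup (Ne.symm hvr) (Ne.symm npr)) h2K2
    · exact absurd (twoK2_from G us vq hn uq' (flip vs') (flip hqs)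
        huv huq (Ne.symm hvs) (Ne.symm nqs)) h2K2
    · exact absurd (claw_from G ur.symm vr.symm hqr.symm hn uq' vq' huv huq hvq) hclaw
    · exact absurd (twoK2_from G ur vp hn up' (flip vr') (flip hpr)
        huv hup (Ne.symm hvr) (Ne.symm npr)) h2K2
    · exact absurd (claw_from G vp.symm hpq hsp.symm vq' vs' hqs hvq hvs nqs) hclaw
    · exact absurd (claw_from G vq.symm hpq.symm hqr vp' vr' hpr hvp hvr npr) hclaw
  -- u adjacent to s,p
  · rcases Hv with ⟨vp, vq, vr', vs'⟩ | ⟨vq, vr, vp', vs'⟩ | ⟨vr, vs, vp', vq'⟩ |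
        ⟨vs, vp, vq', vr'⟩ | ⟨vp, vr, vq', vs'⟩ | ⟨vq, vs, vp', vr'⟩
    · exact absurd (twoK2_from G us vq hn uq' (flip vs') (flip hqs)
        huv huq (Ne.symm hvs) (Ne.symm nqs)) h2K2
    · exact absurd (twoK2_from G us vq hn uq' (flip vs') (flip hqs)
        huv huq (Ne.symm hvs) (Ne.symm nqs)) h2K2
    · exact absurd (twoK2_from G up vr hn ur' (flip vp') hpr
        huv hur (Ne.symm hvp) npr) h2K2
    · exact absurd (claw_from G us.symm vs.symm hrs.symm hn ur' vr' huv hur hvr) hclaw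
    · exact absurd (claw_from G vp.symm hpq hsp.symm vq' vs' hqs hvq hvs nqs) hclaw
    · exact absurd (claw_from G vq.symm hpq.symm hqr vp' vr' hpr hvp hvr npr) hclaw
end
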